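/- Let U be a finite nonempty set and let 𝒮 be a finite nonempty family of subsets of U such that every u ∈ U belongs to some member of 𝒮. Define the point set X = U ⊔ 𝒮 (disjoint union) and the function d : X × X → ℝ by: d(x,x) = 0 for all x; d(S,S') = 1 for all distinct S, S' ∈ 𝒮; d(u,S) = d(S,u) = 1 whenever u ∈ U, S ∈ 𝒮 and u ∈ S; and d(x,y) = 2 for all other pairs of distinct points. Then (i) d is a metric on X, and (ii) the minimum cardinality of a set D ⊆ X such that every x ∈ X satisfies min_{y∈D} d(x,y) ≤ 1 equals the minimum cardinality of a subfamily 𝒮' ⊆ 𝒮 with U ⊆ ⋃_{S∈𝒮'} S. -/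

import Mathlib

/-- The point set of the reduction: the disjoint union of the ground set `U` and the
family `𝒮`. -/
abbrev SCSpace (U : Type*) [DecidableEq U] (𝒮 : Finset (Finset U)) : Type _ :=
  U ⊕ {S : Finset U // S ∈ 𝒮}

/-- The distance function of the reduction: `d(x,x) = 0`; `d(S,S') = 1` for distinct
members `S, S'` of `𝒮`; `d(u,S) = d(S,u) = 1` whenever `u ∈ S`; all other pairs of
distinct points are at distance `2`. -/
def scDist {U : Type*} [DecidableEq U] (𝒮 : Finset (Finset U)) :
    SCSpace U 𝒮 → SCSpace U 𝒮 → ℝ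
  | Sum.inl u, Sum.inl u' => if u = u' then 0 else 2
  | Sum.inl u, Sum.inr S => if u ∈ S.1 then 1 else 2
  | Sum.inr S, Sum.inl u => if u ∈ S.1 then 1 else 2
  | Sum.inr S, Sum.inr S' => if S = S' then 0 else 1

/-- given a feasible set cover instance `(U, 𝒮)` with `U` finite nonempty
and `𝒮` finite nonempty, the function `scDist` is a metric on `U ⊔ 𝒮`, and the minimum
size of a `1`-dominating set of this metric space equals the minimum size of a set cover
`𝒮' ⊆ 𝒮` of `U`. -/
theorem statement15 (U : Type*) [Fintype U] [DecidableEq U] [Nonempty U]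
    (𝒮 : Finset (Finset U)) (h𝒮 : 𝒮.Nonempty)
    (hfeas : ∀ u : U, ∃ S ∈ 𝒮, u ∈ S) :
    ((∀ x, scDist 𝒮 x x = 0) ∧
     (∀ x y, scDist 𝒮 x y = 0 → x = y) ∧
     (∀ x y, scDist 𝒮 x y = scDist 𝒮 y x) ∧
     (∀ x y z, scDist 𝒮 x z ≤ scDist 𝒮 x y + scDist 𝒮 y z)) ∧
    sInf {m : ℕ | ∃ D : Finset (SCSpace U 𝒮), D.card = m ∧
        ∀ x : SCSpace U 𝒮, ∃ y ∈ D, scDist 𝒮 x y ≤ 1} =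
    sInf {m : ℕ | ∃ 𝒮' ⊆ 𝒮, 𝒮'.card = m ∧ ∀ u : U, ∃ S ∈ 𝒮', u ∈ S} := by
  constructor
  · refine ⟨?_, ?_, ?_, ?_⟩
    · rintro (u | S) <;> simp [scDist]
    · rintro (u | S) (u' | S') <;> simp [scDist] <;> split_ifs <;> norm_num <;> tauto
    · rintro (u | S) (u' | S') <;> simp [scDist] <;> split_ifs <;>
        first | rfl | norm_num <;> tauto
    · rintro (a | a) (b | b) (c | c) <;> simp only [scDist] <;> split_ifs <;>
        norm_num <;> simp_all
  · set A := {m : ℕ | ∃ D : Finset (SCSpace U 𝒮), D.card = m ∧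
        ∀ x : SCSpace U 𝒮, ∃ y ∈ D, scDist 𝒮 x y ≤ 1} with hA
    set B := {m : ℕ | ∃ 𝒮' ⊆ 𝒮, 𝒮'.card = m ∧ ∀ u : U, ∃ S ∈ 𝒮', u ∈ S} with hB
    choose g hg1 hg2 using hfeas
    have hBne : B.Nonempty := ⟨𝒮.card, 𝒮, le_refl _, rfl, fun u => ⟨g u, hg1 u, hg2 u⟩⟩
    apply le_antisymm
    · -- from a cover build a dominating set
      obtain ⟨𝒮', h𝒮'sub, h𝒮'card, h𝒮'cov⟩ := Nat.sInf_mem hBne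
      have h𝒮'ne : 𝒮'.Nonempty := by
        obtain ⟨u⟩ := ‹Nonempty U›
        obtain ⟨S, hS, _⟩ := h𝒮'cov u
        exact ⟨S, hS⟩
      obtain ⟨S₀, hS₀⟩ := h𝒮'ne
      refine Nat.sInf_le ?_
      refine ⟨𝒮'.attach.image (fun S => Sum.inr ⟨S.1, h𝒮'sub S.2⟩), ?_, ?_⟩
      · rw [Finset.card_image_of_injective, Finset.card_attach, h𝒮'card]
        intro a b hab
        have h2 := Sum.inr.inj (show (Sum.inr ⟨a.1, h𝒮'sub a.2⟩ : SCSpace U 𝒮) = Sum.inr ⟨b.1, h𝒮'sub b.2⟩ from hab)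
        have h3 : a.1 = b.1 := Subtype.mk.inj h2
        exact Subtype.ext h3
      · rintro (u | S)
        · obtain ⟨S, hS, huS⟩ := h𝒮'cov u
          refine ⟨Sum.inr ⟨S, h𝒮'sub hS⟩, ?_, ?_⟩
          · exact Finset.mem_image.2 ⟨⟨S, hS⟩, Finset.mem_attach _ _, rfl⟩
          · simp [scDist, huS]
        · refine ⟨Sum.inr ⟨S₀, h𝒮'sub hS₀⟩, ?_, ?_⟩
          · exact Finset.mem_image.2 ⟨⟨S₀, hS₀⟩, Finset.mem_attach _ _, rfl⟩
          · simp only [scDist]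
            split_ifs <;> norm_num
    · -- from a dominating set build a cover
      have hAne : A.Nonempty := by
        refine ⟨(Finset.univ : Finset (SCSpace U 𝒮)).card, Finset.univ, rfl, ?_⟩
        intro x
        refine ⟨x, Finset.mem_univ _, ?_⟩
        rcases x with u | S <;> simp [scDist]
      obtain ⟨D, hDcard, hDdom⟩ := Nat.sInf_mem hAne
      set f : SCSpace U 𝒮 → Finset U := fun x => match x with
        | Sum.inl u => g u
        | Sum.inr S => S.1 with hf
      refine le_trans (Nat.sInf_le ⟨D.image f, ?_, rfl, ?_⟩) ?_
      · intro S hS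
        obtain ⟨x, _, rfl⟩ := Finset.mem_image.1 hS
        rcases x with u | S'
        · exact hg1 u
        · exact S'.2
      · intro u
        obtain ⟨y, hyD, hyd⟩ := hDdom (Sum.inl u)
        rcases y with u' | S
        · have : u = u' := by
            by_contra h
            simp only [scDist, if_neg h] at hyd
            norm_num at hyd
          subst this
          exact ⟨g u, Finset.mem_image_of_mem f hyD, hg2 u⟩
        · have huS : u ∈ S.1 := by
            by_contra h
            simp only [scDist, if_neg h] at hyd
            norm_num at hyd
          exact ⟨S.1, Finset.mem_image_of_mem f hyD, huS⟩
      · rw [← hDcard]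
        exact Finset.card_image_le
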